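/- For every preference profile P and every tiebreaker τ for P, the River diagram is a directed spanning tree of A(P) oriented away from a single root: it is acyclic, every vertex has at most one incoming edge, it has exactly |A(P)| − 1 edges, and exactly one vertex has no incoming edge. Consequently the River winner set RV(P,τ) is a singleton (River is resolute). -/

import Mathlib

/-! ## Preference profiles -/

/-- A preference profile: a finite set of voters, a finite set of alternatives,
and for each voter a (Boolean-valued) preference relation, `pref i x y` meaning
voter `i` ranks `x` above `y`. -/
structure Profile (ν α : Type) where
  voters : Finset ν
  alts : Finset α
  pref : ν → α → α → Bool

namespace Profile

variable {ν α : Type}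

/-- A profile is valid if there is at least one voter, at least two alternatives,
and every voter's preference is a strict linear order on the alternatives. -/
def Valid (P : Profile ν α) : Prop :=
  P.voters.Nonempty ∧ 2 ≤ P.alts.card ∧
  (∀ i ∈ P.voters, ∀ a ∈ P.alts, ¬ P.pref i a a) ∧
  (∀ i ∈ P.voters, ∀ a ∈ P.alts, ∀ b ∈ P.alts, ∀ c ∈ P.alts,
      P.pref i a b → P.pref i b c → P.pref i a c) ∧
  (∀ i ∈ P.voters, ∀ a ∈ P.alts, ∀ b ∈ P.alts, a ≠ b → (P.pref i a b ↔ ¬ P.pref i b a))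

/-- The majority margin of `x` over `y`. -/
def margin (P : Profile ν α) (x y : α) : ℤ :=
  ((P.voters.filter (fun i => P.pref i x y)).card : ℤ) -
    ((P.voters.filter (fun i => P.pref i y x)).card : ℤ)

/-- The restriction of a profile to the alternatives other than `x`. -/
def restrict [DecidableEq α] (P : Profile ν α) (x : α) : Profile ν α :=
  ⟨P.voters, P.alts.erase x, P.pref⟩

/-- `y` Pareto-dominates `x`: every voter ranks `y` above `x`,
i.e. the margin of `y` over `x` equals the number of voters. -/
def ParetoDominates (P : Profile ν α) (y x : α) : Prop :=
  P.margin y x = P.voters.card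

/-- A profile is uniquely weighted if no margin between distinct alternatives is zero and
distinct ordered pairs of distinct alternatives have distinct margins. -/
def UniquelyWeighted (P : Profile ν α) : Prop :=
  (∀ x ∈ P.alts, ∀ y ∈ P.alts, x ≠ y → P.margin x y ≠ 0) ∧
  (∀ x ∈ P.alts, ∀ y ∈ P.alts, ∀ v ∈ P.alts, ∀ w ∈ P.alts,
      x ≠ y → v ≠ w → (x, y) ≠ (v, w) → P.margin x y ≠ P.margin v w)

end Profile

/-! ## Lists, precedence, tiebreakers -/

/-- `e` precedes `f` in the list `L`. -/
def Precedes {β : Type} (L : List β) (e f : β) : Prop :=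
  ∃ l₁ l₂ l₃ : List β, L = l₁ ++ e :: (l₂ ++ f :: l₃)

/-- A tiebreaker for a profile `P`: a linear order (list) of all ordered pairs of distinct
alternatives with nonnegative margin, in which pairs with strictly larger margin come first. -/
def IsTiebreaker {ν α : Type} (P : Profile ν α) (L : List (α × α)) : Prop :=
  L.Nodup ∧
  (∀ e : α × α, e ∈ L ↔ e.1 ∈ P.alts ∧ e.2 ∈ P.alts ∧ e.1 ≠ e.2 ∧ 0 ≤ P.margin e.1 e.2) ∧
  L.Pairwise (fun e f => P.margin f.1 f.2 ≤ P.margin e.1 e.2)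

/-! ## The River method -/

open Classical in
/-- The River diagram: process the edges in the order given by `L`, adding an edge unless
it would create a directed cycle or a second incoming edge at its target. -/
noncomputable def riverDiagram {α : Type} (L : List (α × α)) : Finset (α × α) :=
  L.foldl (fun E e =>
    if (∃ f ∈ E, f.2 = e.2) ∨ Relation.ReflTransGen (fun a b => (a, b) ∈ E) e.2 e.1
    then E else insert e E) ∅

open Classical in
/-- The River winners: the sources (vertices with no incoming edge) of the River diagram. -/
noncomputable def riverWinners {ν α : Type} (P : Profile ν α) (L : List (α × α)) : Finset α :=
  P.alts.filter (fun x => ∀ f ∈ riverDiagram L, f.2 ≠ x)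

/-! ## Split Cycle -/

/-- The (cyclically) consecutive edges of a cycle given by a list of distinct vertices. -/
def cycleEdges {α : Type} (c : List α) : List (α × α) := c.zip (c.rotate 1)

/-- A majority cycle: a cycle of distinct alternatives all of whose edges have positive margin. -/
def IsMajorityCycle {ν α : Type} (P : Profile ν α) (c : List α) : Prop :=
  c.Nodup ∧ (∀ a ∈ c, a ∈ P.alts) ∧ ∀ e ∈ cycleEdges c, 0 < P.margin e.1 e.2

/-- `e` is a splitting edge of some majority cycle: it attains the minimum margin on the cycle. -/
def IsSplittingEdge {ν α : Type} (P : Profile ν α) (e : α × α) : Prop :=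
  ∃ c : List α, IsMajorityCycle P c ∧ e ∈ cycleEdges c ∧
    ∀ f ∈ cycleEdges c, P.margin e.1 e.2 ≤ P.margin f.1 f.2

open Classical in
/-- The Split Cycle winners: alternatives with no incoming edge in the Split Cycle diagram,
whose edges are the positive-margin pairs that are not splitting edges of any majority cycle. -/
noncomputable def splitCycleWinners {ν α : Type} (P : Profile ν α) : Finset α :=
  P.alts.filter (fun x => ¬ ∃ y ∈ P.alts, 0 < P.margin y x ∧ ¬ IsSplittingEdge P (y, x))

/-! ## Ranked Pairs -/

/-- A processing order for Ranked Pairs: all pairs with positive margin,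
ordered by decreasing margin. -/
def IsRPOrder {ν α : Type} (P : Profile ν α) (L : List (α × α)) : Prop :=
  L.Nodup ∧
  (∀ e : α × α, e ∈ L ↔ e.1 ∈ P.alts ∧ e.2 ∈ P.alts ∧ 0 < P.margin e.1 e.2) ∧
  L.Pairwise (fun e f => P.margin f.1 f.2 ≤ P.margin e.1 e.2)

open Classical in
/-- The Ranked Pairs diagram: add each edge in order unless it would create a directed cycle. -/
noncomputable def rpDiagram {α : Type} (L : List (α × α)) : Finset (α × α) :=
  L.foldl (fun E e =>
    if Relation.ReflTransGen (fun a b => (a, b) ∈ E) e.2 e.1 then E else insert e E) ∅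

open Classical in
/-- The Ranked Pairs winners: sources of the Ranked Pairs diagram. -/
noncomputable def rpWinners {ν α : Type} (P : Profile ν α) (L : List (α × α)) : Finset α :=
  P.alts.filter (fun x => ∀ f ∈ rpDiagram L, f.2 ≠ x)

/-! ## Beat Path -/

/-- A majority path: a sequence of distinct alternatives with positive margins along it. -/
def IsMajorityPath {ν α : Type} (P : Profile ν α) (p : List α) : Prop :=
  p.Nodup ∧ (∀ a ∈ p, a ∈ P.alts) ∧ p.Chain' (fun a b => 0 < P.margin a b)

/-- `s_P(x,y)`: the maximum strength (minimum margin along the path) of a majority path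
from `x` to `y`, and `0` if there is no such path. -/
noncomputable def beatPathStrength {ν α : Type} (P : Profile ν α) (x y : α) : ℤ :=
  sSup ({0} ∪ {s : ℤ | ∃ p : List α, IsMajorityPath P p ∧ p.head? = some x ∧
    p.getLast? = some y ∧ ((p.zip p.tail).map (fun e => P.margin e.1 e.2)).min? = some s})

open Classical in
/-- The Beat Path winners. -/
noncomputable def beatPathWinners {ν α : Type} (P : Profile ν α) : Finset α :=
  P.alts.filter (fun x => ∀ y ∈ P.alts, y ≠ x →
    beatPathStrength P y x ≤ beatPathStrength P x y)

/-! ## Stable Voting -/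

/-- Auxiliary, fuel-based definition of Stable Voting (for uniquely weighted profiles).
If only one alternative remains it wins; otherwise the winner is the alternative `x` of the
first pair `(x,y)` (ordered by decreasing margin) with `m(x,y) > 0` and `x` a Split Cycle
winner, such that `x` is a Stable Voting winner of the profile without `y`. -/
noncomputable def svAux {ν α : Type} [DecidableEq α] : ℕ → Profile ν α → Set α
  | 0, P => ↑P.alts
  | (n+1), P =>
      if P.alts.card ≤ 1 then ↑P.alts
      else {x | x ∈ P.alts ∧ ∃ y ∈ P.alts, 0 < P.margin x y ∧ x ∈ splitCycleWinners P ∧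
        x ∈ svAux n (P.restrict y) ∧
        ∀ x' ∈ P.alts, ∀ y' ∈ P.alts, 0 < P.margin x' y' → x' ∈ splitCycleWinners P →
          P.margin x y < P.margin x' y' → x' ∉ svAux n (P.restrict y')}

/-- The Stable Voting winners (for uniquely weighted profiles). -/
noncomputable def svWinners {ν α : Type} [DecidableEq α] (P : Profile ν α) : Set α :=
  svAux P.alts.card P

/-! ## Smith set, covering, quasi-Pareto domination -/

/-- A dominant set of alternatives: nonempty, and each member defeats every non-member. -/
def IsDominant {ν α : Type} (P : Profile ν α) (X : Finset α) : Prop :=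
  X.Nonempty ∧ X ⊆ P.alts ∧ ∀ x ∈ X, ∀ y ∈ P.alts, y ∉ X → 0 < P.margin x y

/-- The Smith set: the inclusion-minimal dominant set. -/
def IsSmithSet {ν α : Type} (P : Profile ν α) (S : Finset α) : Prop :=
  IsDominant P S ∧ ∀ X : Finset α, IsDominant P X → S ⊆ X

/-- `y` covers `x`: `y` defeats `x` and does at least as well against every third alternative. -/
def Covers {ν α : Type} (P : Profile ν α) (y x : α) : Prop :=
  0 < P.margin y x ∧ ∀ z ∈ P.alts, z ≠ x → z ≠ y → P.margin x z ≤ P.margin y z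

/-- `y` quasi-Pareto-dominates `x`. -/
def QuasiParetoDominates {ν α : Type} (P : Profile ν α) (y x : α) : Prop :=
  Covers P y x ∧ ∀ z ∈ P.alts, z ≠ x → z ≠ y →
    P.margin z x ≤ P.margin y x ∧ P.margin x z ≤ P.margin y x

/-! ## Tiebreaker functions -/

/-- A consistent tiebreaker function: it assigns a tiebreaker to every profile, and the relative
order of two edges not involving `x` is unchanged when `x` is removed from the profile. -/
def IsConsistentTBF {ν α : Type} [DecidableEq α] (T : Profile ν α → List (α × α)) : Prop :=
  (∀ P : Profile ν α, IsTiebreaker P (T P)) ∧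
  ∀ (P : Profile ν α) (x a b c d : α), x ∈ P.alts →
    x ≠ a → x ≠ b → x ≠ c → x ≠ d →
    (a, b) ∈ T P → (c, d) ∈ T P →
    (Precedes (T P) (a, b) (c, d) ↔ Precedes (T (P.restrict x)) (a, b) (c, d))

/-- A Pareto-consistent tiebreaker function: consistent, and whenever `y` Pareto-dominates `x`,
the edge `(y,z)` precedes the edge `(x,z)` for every third alternative `z`. -/
def IsParetoConsistentTBF {ν α : Type} [DecidableEq α]
    (T : Profile ν α → List (α × α)) : Prop :=
  IsConsistentTBF T ∧
  ∀ (P : Profile ν α) (x y z : α), P.ParetoDominates y x →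
    z ≠ x → z ≠ y → (y, z) ∈ T P → (x, z) ∈ T P → Precedes (T P) (y, z) (x, z)

/-- A quasi-Pareto-consistent tiebreaker function. -/
def IsQuasiParetoConsistentTBF {ν α : Type} [DecidableEq α]
    (T : Profile ν α → List (α × α)) : Prop :=
  IsParetoConsistentTBF T ∧
  (∀ (P : Profile ν α) (x y y' : α),
      P.margin y x = P.margin y' x → QuasiParetoDominates P y x →
      ¬ QuasiParetoDominates P y' x →
      (y, x) ∈ T P → (y', x) ∈ T P → Precedes (T P) (y, x) (y', x)) ∧
  (∀ (P : Profile ν α) (x y z : α), QuasiParetoDominates P y x →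
      ((x, z) ∈ T P → (y, z) ∈ T P → Precedes (T P) (y, z) (x, z)) ∧
      ((x, z) ∈ T P → (y, x) ∈ T P → Precedes (T P) (y, x) (x, z)))

/-- A tiebreaker for `P` induced by the fixed tie-breaking order `r` on pairs:
edges are ordered by decreasing margin, ties in margin broken according to `r`. -/
def IsTiebreakerVia {ν α : Type} (r : α × α → α × α → Prop) (P : Profile ν α)
    (L : List (α × α)) : Prop :=
  IsTiebreaker P L ∧ ∀ e f : α × α, Precedes L e f →
    P.margin f.1 f.2 < P.margin e.1 e.2 ∨ (P.margin e.1 e.2 = P.margin f.1 f.2 ∧ r e f)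

/-! ## Auxiliary lemmas for the River theorem -/

namespace RiverAux

open Classical

variable {α : Type}

/-- The rejection condition of the River method. -/
def Cond (E : Finset (α × α)) (e : α × α) : Prop :=
  (∃ f ∈ E, f.2 = e.2) ∨ Relation.ReflTransGen (fun a b => (a, b) ∈ E) e.2 e.1

open Classical in
noncomputable def step : Finset (α × α) → α × α → Finset (α × α) :=
  fun E e => if (∃ f ∈ E, f.2 = e.2) ∨ Relation.ReflTransGen (fun a b => (a, b) ∈ E) e.2 e.1
    then E else insert e E

theorem riverDiagram_eq (L : List (α × α)) :
    riverDiagram L = L.foldl step ∅ := rfl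

lemma step_cases (E : Finset (α × α)) (e : α × α) :
    (Cond E e ∧ step E e = E) ∨ (¬ Cond E e ∧ step E e = insert e E) := by
  by_cases h : Cond E e
  · exact Or.inl ⟨h, if_pos h⟩
  · exact Or.inr ⟨h, if_neg h⟩

lemma subset_step (E : Finset (α × α)) (e : α × α) : E ⊆ step E e := by
  rcases step_cases E e with ⟨_, hE⟩ | ⟨_, hE⟩ <;> rw [hE]
  exact Finset.subset_insert e E

lemma subset_foldl (l : List (α × α)) (E : Finset (α × α)) : E ⊆ l.foldl step E := by
  induction l generalizing E with
  | nil => exact fun _ h => h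
  | cons a l ih => exact (subset_step E a).trans (ih (step E a))

lemma cond_mono {E E' : Finset (α × α)} (h : E ⊆ E') {e : α × α} (hc : Cond E e) :
    Cond E' e := by
  rcases hc with ⟨f, hf, h2⟩ | hp
  · exact Or.inl ⟨f, h hf, h2⟩
  · exact Or.inr (Relation.ReflTransGen.mono (p := fun a b => (a, b) ∈ E') (fun a b hab => h hab) _ _ hp)

lemma mem_or_cond (l : List (α × α)) (E : Finset (α × α)) (e : α × α) (he : e ∈ l) :
    e ∈ l.foldl step E ∨ Cond (l.foldl step E) e := by
  induction l generalizing E with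
  | nil => cases he
  | cons a l ih =>
    rcases List.mem_cons.1 he with rfl | he'
    · rcases step_cases E e with ⟨hc, hE⟩ | ⟨_, hE⟩
      · right
        simp only [List.foldl_cons, hE]
        exact cond_mono (subset_foldl l E) hc
      · left
        simp only [List.foldl_cons, hE]
        exact subset_foldl l _ (Finset.mem_insert_self e E)
    · exact ih (step E a) he'

lemma rtg_insert {E : Finset (α × α)} {e : α × α}
    (he : ¬ Relation.ReflTransGen (fun a b => (a, b) ∈ E) e.2 e.1) {a b : α}
    (h : Relation.ReflTransGen (fun x y => (x, y) ∈ insert e E) a b) :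
    Relation.ReflTransGen (fun x y => (x, y) ∈ E) a b ∨
      (Relation.ReflTransGen (fun x y => (x, y) ∈ E) a e.1 ∧
       Relation.ReflTransGen (fun x y => (x, y) ∈ E) e.2 b) := by
  induction h using Relation.ReflTransGen.head_induction_on with
  | refl => exact Or.inl Relation.ReflTransGen.refl
  | head h' _ ih =>
    rename_i x c
    rcases Finset.mem_insert.1 h' with heq | hmem
    · subst heq
      rcases ih with ihl | ⟨ih1, _⟩
      · exact Or.inr ⟨Relation.ReflTransGen.refl, ihl⟩
      · exact absurd ih1 he
    · rcases ih with ihl | ⟨ih1, ih2⟩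
      · exact Or.inl (ihl.head hmem)
      · exact Or.inr ⟨ih1.head hmem, ih2⟩

/-- Invariant maintained by the River fold. -/
def Inv (L : List (α × α)) (E : Finset (α × α)) : Prop :=
  (∀ e ∈ E, ¬ Relation.ReflTransGen (fun a b => (a, b) ∈ E) e.2 e.1) ∧
  (∀ e ∈ E, ∀ f ∈ E, e.2 = f.2 → e = f) ∧
  (∀ e ∈ E, e ∈ L)

lemma inv_step (L : List (α × α)) (E : Finset (α × α)) (e : α × α)
    (heL : e ∈ L) (h : Inv L E) : Inv L (step E e) := by
  rcases step_cases E e with ⟨_, hE⟩ | ⟨hc, hE⟩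
  · rwa [hE]
  · rw [hE]
    obtain ⟨hin, hcyc⟩ := not_or.1 hc
    refine ⟨?_, ?_, ?_⟩
    · intro f hf hpath
      rcases rtg_insert hcyc hpath with hp | ⟨hp1, hp2⟩
      · rcases Finset.mem_insert.1 hf with rfl | hfE
        · exact hcyc hp
        · exact h.1 f hfE hp
      · rcases Finset.mem_insert.1 hf with rfl | hfE
        · exact hcyc hp1
        · have hfE' : (f.1, f.2) ∈ E := by simpa using hfE
          exact hcyc ((hp2.tail hfE').trans hp1)
    · intro f hf g hg hfg
      rcases Finset.mem_insert.1 hf with rfl | hfE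
      · rcases Finset.mem_insert.1 hg with rfl | hgE
        · rfl
        · exact absurd ⟨g, hgE, hfg.symm⟩ hin
      · rcases Finset.mem_insert.1 hg with rfl | hgE
        · exact absurd ⟨f, hfE, hfg⟩ hin
        · exact h.2.1 f hfE g hgE hfg
    · intro f hf
      rcases Finset.mem_insert.1 hf with rfl | hfE
      · exact heL
      · exact h.2.2 f hfE

lemma inv_foldl (L : List (α × α)) :
    ∀ (l : List (α × α)) (E : Finset (α × α)), (∀ x ∈ l, x ∈ L) → Inv L E →
      Inv L (l.foldl step E) := by
  intro l
  induction l with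
  | nil => exact fun E _ h => h
  | cons a l ih =>
    intro E hl h
    exact ih (step E a) (fun x hx => hl x (List.mem_cons_of_mem a hx))
      (inv_step L E a (hl a List.mem_cons_self) h)

lemma inv_river (L : List (α × α)) : Inv L (riverDiagram L) := by
  rw [riverDiagram_eq]
  refine inv_foldl L L ∅ (fun x hx => hx) ?_
  refine ⟨?_, ?_, ?_⟩ <;> intro e he <;> exact absurd he (Finset.notMem_empty e)

lemma exists_source {D : Finset (α × α)}
    (hacyc : ∀ e ∈ D, ¬ Relation.ReflTransGen (fun a b => (a, b) ∈ D) e.2 e.1)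
    (a : α) :
    ∃ b : α, Relation.ReflTransGen (fun x y => (x, y) ∈ D) b a ∧ ∀ f ∈ D, f.2 ≠ b := by
  classical
  set R := fun x y : α => (x, y) ∈ D with hR
  let Anc : α → Finset α := fun v =>
    (insert v (D.image Prod.fst)).filter (fun b => Relation.ReflTransGen R b v)
  have hself : ∀ v, v ∈ Anc v := fun v =>
    Finset.mem_filter.2 ⟨Finset.mem_insert_self v _, Relation.ReflTransGen.refl⟩
  have key : ∀ n, ∀ v : α, (Anc v).card ≤ n →
      ∃ b : α, Relation.ReflTransGen R b v ∧ ∀ f ∈ D, f.2 ≠ b := by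
    intro n
    induction n with
    | zero =>
      intro v hv
      have := Finset.card_pos.2 ⟨v, hself v⟩
      omega
    | succ n ih =>
      intro v hv
      by_cases hsrc : ∃ f ∈ D, f.2 = v
      · obtain ⟨f, hf, hfv⟩ := hsrc
        have hedge : R f.1 v := by
          rw [hR]
          simpa [← hfv] using hf
        have hnot : ¬ Relation.ReflTransGen R v f.1 := by
          have := hacyc f hf
          rwa [hfv] at this
        have hsub : Anc f.1 ⊆ Anc v := by
          intro b hb
          simp only [Anc, Finset.mem_filter, Finset.mem_insert] at hb ⊢
          obtain ⟨hb1, hb2⟩ := hb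
          refine ⟨?_, hb2.tail hedge⟩
          rcases hb1 with rfl | hb1
          · exact Or.inr (Finset.mem_image.2 ⟨f, hf, rfl⟩)
          · exact Or.inr hb1
        have hvmem : v ∉ Anc f.1 := by
          intro hmem
          simp only [Anc, Finset.mem_filter] at hmem
          exact hnot hmem.2
        have hlt : (Anc f.1).card < (Anc v).card :=
          Finset.card_lt_card (Finset.ssubset_iff_of_subset hsub |>.2 ⟨v, hself v, hvmem⟩)
        obtain ⟨b, hb1, hb2⟩ := ih f.1 (by omega)
        exact ⟨b, hb1.tail hedge, hb2⟩
      · push_neg at hsrc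
        exact ⟨v, Relation.ReflTransGen.refl, hsrc⟩
  exact key (Anc a).card a le_rfl

end RiverAux

/-! ## STATEMENT 1: the River diagram is a directed spanning tree oriented away from a
single root, and River is resolute -/

theorem river_diagram_is_tree {ν α : Type} (P : Profile ν α) (hP : P.Valid)
    (L : List (α × α)) (hL : IsTiebreaker P L) :
    (∀ e ∈ riverDiagram L,
        ¬ Relation.ReflTransGen (fun a b => (a, b) ∈ riverDiagram L) e.2 e.1) ∧
    (∀ e ∈ riverDiagram L, ∀ f ∈ riverDiagram L, e.2 = f.2 → e = f) ∧
    (riverDiagram L).card = P.alts.card - 1 ∧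
    (∃! x : α, x ∈ P.alts ∧ ∀ f ∈ riverDiagram L, f.2 ≠ x) ∧
    (∃ x : α, riverWinners P L = {x}) := by
  classical
  obtain ⟨hnd, hmemL, hsort⟩ := hL
  set D := riverDiagram L with hD
  obtain ⟨hacyc, hindeg, hsubL⟩ := RiverAux.inv_river L
  -- endpoints of edges are alternatives
  have hends : ∀ f ∈ D, f.1 ∈ P.alts ∧ f.2 ∈ P.alts ∧ f.1 ≠ f.2 := by
    intro f hf
    have := (hmemL f).1 (hsubL f hf)
    exact ⟨this.1, this.2.1, this.2.2.1⟩
  -- margins are antisymmetric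
  have hmarg : ∀ x y : α, P.margin y x = - P.margin x y := by
    intro x y
    unfold Profile.margin
    ring
  -- there cannot be two distinct sources
  have hcase : ∀ x y : α, x ∈ P.alts → y ∈ P.alts → x ≠ y → 0 ≤ P.margin x y →
      (∀ f ∈ D, f.2 ≠ x) → (∀ f ∈ D, f.2 ≠ y) → False := by
    intro x y hx hy hxy hm hsx hsy
    have hmemxy : (x, y) ∈ L := (hmemL (x, y)).2 ⟨hx, hy, hxy, hm⟩
    rcases RiverAux.mem_or_cond L ∅ (x, y) hmemxy with hin | hc
    · exact hsy (x, y) hin rfl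
    · rcases hc with ⟨f, hf, hf2⟩ | hp
      · exact hsy f hf hf2
      · rcases hp.cases_tail with heq | ⟨c, _, hcx⟩
        · exact hxy (by simpa using heq)
        · exact hsx (c, x) hcx rfl
  have huniq : ∀ x ∈ P.alts, ∀ y ∈ P.alts,
      (∀ f ∈ D, f.2 ≠ x) → (∀ f ∈ D, f.2 ≠ y) → x = y := by
    intro x hx y hy hsx hsy
    by_contra hxy
    rcases le_or_gt 0 (P.margin x y) with hm | hm
    · exact hcase x y hx hy hxy hm hsx hsy
    · have : 0 ≤ P.margin y x := by rw [hmarg]; omega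
      exact hcase y x hy hx (Ne.symm hxy) this hsy hsx
  -- existence of a source
  have hcard2 : 2 ≤ P.alts.card := hP.2.1
  have halts : P.alts.Nonempty := Finset.card_pos.1 (by omega)
  obtain ⟨a, ha⟩ := halts
  obtain ⟨x₀, hx₀path, hx₀src⟩ := RiverAux.exists_source hacyc a
  have hx₀alts : x₀ ∈ P.alts := by
    rcases hx₀path.cases_head with heq | ⟨c, hc, _⟩
    · exact heq ▸ ha
    · exact (hends (x₀, c) hc).1
  -- targets form exactly the alternatives other than x₀
  have himg : D.image Prod.snd = P.alts.erase x₀ := by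
    ext z
    simp only [Finset.mem_image, Finset.mem_erase]
    constructor
    · rintro ⟨f, hf, rfl⟩
      exact ⟨hx₀src f hf, (hends f hf).2.1⟩
    · rintro ⟨hzx, hz⟩
      by_contra hno
      push_neg at hno
      have hzsrc : ∀ f ∈ D, f.2 ≠ z := fun f hf => hno f hf
      exact hzx (huniq z hz x₀ hx₀alts hzsrc hx₀src)
  have hcardD : D.card = P.alts.card - 1 := by
    have hinj : Set.InjOn Prod.snd ↑D :=
      fun e he f hf h => hindeg e he f hf h
    rw [← Finset.card_image_of_injOn hinj, himg, Finset.card_erase_of_mem hx₀alts]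
  refine ⟨hacyc, hindeg, hcardD, ?_, ?_⟩
  · exact ⟨x₀, ⟨hx₀alts, hx₀src⟩, fun y hy => huniq y hy.1 x₀ hx₀alts hy.2 hx₀src⟩
  · refine ⟨x₀, ?_⟩
    ext z
    simp only [riverWinners, Finset.mem_filter, Finset.mem_singleton]
    constructor
    · rintro ⟨hz, hzsrc⟩
      exact huniq z hz x₀ hx₀alts hzsrc hx₀src
    · rintro rfl
      exact ⟨hx₀alts, hx₀src⟩
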